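/- Let p be a prime, q a power of p with q ≡ 3 (mod 4), and n = (q+1)/4. Let m ≥ 2 be a divisor of n. Let k be an algebraically closed field of characteristic p, assume Y^m − φ_n(X) is irreducible in k(X)[Y], and let K := k(X)[Y]/(Y^m − φ_n(X)) be the function field of the curve y^m = φ_n(x). Then there exists a k-algebra automorphism σ of K of order exactly 3 (explicitly, induced by (x, y) ↦ ((2x+12)/(−x+2), (−4)^t y/(−x+2)^t) where n = t·m). -/

import Mathlib

open Polynomial

/-- The function field `k(X)[Y]/(Y^m - f(X))` of the affine plane curve `y^m = f(x)`. -/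
abbrev FunField (k : Type*) [Field k] (m : ℕ) (f : k[X]) :=
  (RatFunc k)[X] ⧸ Ideal.span {(X : (RatFunc k)[X]) ^ m - C (algebraMap k[X] (RatFunc k) f)}

section Aux

variable {k : Type*} [Field k]

lemma aeval_inj_of_nonconst [IsAlgClosed k] (g : RatFunc k)
    (hg : ∀ c : k, g ≠ algebraMap k (RatFunc k) c) :
    Function.Injective (Polynomial.aeval (R := k) g) := by
  set φ : k[X] →+* RatFunc k := (Polynomial.aeval (R := k) g).toRingHom with hφ
  have hker : ∀ P : k[X], P ∈ RingHom.ker φ → P = 0 := by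
    intro P hP
    by_contra hP0
    obtain ⟨g0, hg0⟩ := (IsPrincipalIdealRing.principal (RingHom.ker φ)).principal
    have hg00 : g0 ≠ 0 := by
      rintro rfl
      rw [hg0] at hP
      rw [Submodule.span_zero_singleton, Submodule.mem_bot] at hP
      exact hP0 hP
    have hprime : Prime g0 := by
      have := RingHom.ker_isPrime φ
      rw [hg0] at this
      exact (Ideal.span_singleton_prime hg00).mp this
    have hdeg : g0.degree = 1 := IsAlgClosed.degree_eq_one_of_irreducible k hprime.irreducible
    have he := Polynomial.eq_X_add_C_of_degree_le_one (le_of_eq hdeg)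
    have hmem : g0 ∈ RingHom.ker φ := by rw [hg0]; exact Ideal.subset_span rfl
    rw [RingHom.mem_ker] at hmem
    have hc1 : g0.coeff 1 ≠ 0 := by
      intro h0
      rw [h0, map_zero, zero_mul, zero_add] at he
      rw [he] at hdeg
      have h2 : (1 : WithBot ℕ) ≤ 0 := hdeg ▸ Polynomial.degree_C_le
      norm_num at h2
    rw [he] at hmem
    simp only [hφ, AlgHom.toRingHom_eq_coe, RingHom.coe_coe, map_add, map_mul, aeval_C,
      aeval_X] at hmem
    have h1 : (algebraMap k (RatFunc k)) (g0.coeff 1) ≠ 0 := by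
      simpa using hc1
    have : g = algebraMap k (RatFunc k) (-(g0.coeff 0) / g0.coeff 1) := by
      rw [map_div₀, map_neg, eq_div_iff h1]
      linear_combination hmem
    exact hg _ this
  intro a b hab
  have h3 : a - b ∈ RingHom.ker φ := by simp [RingHom.mem_ker, hφ, hab]
  exact sub_eq_zero.mp (hker _ h3)

noncomputable def molt [IsAlgClosed k] (g : RatFunc k)
    (hg : ∀ c : k, g ≠ algebraMap k (RatFunc k) c) :
    RatFunc k →ₐ[k] RatFunc k :=
  RatFunc.liftAlgHom (Polynomial.aeval g)
    (nonZeroDivisors_le_comap_nonZeroDivisors_of_injective _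
      (aeval_inj_of_nonconst g hg))

lemma molt_algebraMap [IsAlgClosed k] (g : RatFunc k)
    (hg : ∀ c : k, g ≠ algebraMap k (RatFunc k) c)
    (p : k[X]) : molt g hg (algebraMap k[X] (RatFunc k) p) = Polynomial.aeval g p := by
  have := RatFunc.liftAlgHom_apply_div (φ := Polynomial.aeval g)
    (hφ := nonZeroDivisors_le_comap_nonZeroDivisors_of_injective _
      (aeval_inj_of_nonconst g hg)) p 1
  simpa [molt] using this

lemma molt_X [IsAlgClosed k] (g : RatFunc k) (hg : ∀ c : k, g ≠ algebraMap k (RatFunc k) c) :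
    molt g hg RatFunc.X = g := by
  rw [← RatFunc.algebraMap_X, molt_algebraMap, Polynomial.aeval_X]

lemma ratfunc_algHom_ext {T : Type*} [CommRing T] [Algebra k T]
    {ψ₁ ψ₂ : RatFunc k →ₐ[k] T} (h : ψ₁ RatFunc.X = ψ₂ RatFunc.X) : ψ₁ = ψ₂ := by
  have h2 : (ψ₁ : RatFunc k →+* T) = ψ₂ := by
    apply IsLocalization.ringHom_ext (nonZeroDivisors k[X])
    apply Polynomial.ringHom_ext
    · intro a
      simp only [RingHom.comp_apply]
      have ha : algebraMap k[X] (RatFunc k) (C a) = algebraMap k (RatFunc k) a := by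
        simp [RatFunc.algebraMap_C]
      rw [ha]
      exact (ψ₁.commutes a).trans (ψ₂.commutes a).symm
    · simp only [RingHom.comp_apply, RatFunc.algebraMap_X]
      exact h
  exact AlgHom.ext fun x => RingHom.congr_fun h2 x

noncomputable def thetaHom (β : RatFunc k →ₐ[k] RatFunc k) (v : RatFunc k) :
    (RatFunc k)[X] →ₐ[k] (RatFunc k)[X] where
  toRingHom := Polynomial.eval₂RingHom (Polynomial.C.comp β.toRingHom)
    (Polynomial.C v * Polynomial.X)
  commutes' := fun c => by
    have hb : β (RatFunc.C c) = RatFunc.C c := by simpa using β.commutes c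
    simp [Polynomial.algebraMap_apply, hb]

@[simp] lemma thetaHom_C (β : RatFunc k →ₐ[k] RatFunc k) (v : RatFunc k) (a : RatFunc k) :
    thetaHom β v (C a) = C (β a) := Polynomial.eval₂_C _ _

@[simp] lemma thetaHom_X (β : RatFunc k →ₐ[k] RatFunc k) (v : RatFunc k) :
    thetaHom β v X = C v * X := Polynomial.eval₂_X _ _

variable (m : ℕ) (f : k[X])

noncomputable def sigmaHom (β : RatFunc k →ₐ[k] RatFunc k) (v : RatFunc k)
    (hβf : β (algebraMap k[X] (RatFunc k) f) = v ^ m * algebraMap k[X] (RatFunc k) f) :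
    FunField k m f →ₐ[k] FunField k m f :=
  Ideal.Quotient.liftₐ _ ((Ideal.Quotient.mkₐ k _).comp (thetaHom β v)) (by
    intro a ha
    rw [Ideal.mem_span_singleton] at ha
    obtain ⟨c, rfl⟩ := ha
    rw [map_mul]
    have hgen : thetaHom β v ((X : (RatFunc k)[X]) ^ m - C (algebraMap k[X] (RatFunc k) f))
        = C (v ^ m) * ((X : (RatFunc k)[X]) ^ m - C (algebraMap k[X] (RatFunc k) f)) := by
      rw [map_sub, map_pow, thetaHom_X, thetaHom_C, hβf]
      push_cast [map_mul, map_pow]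
      ring
    have h0 : (Ideal.Quotient.mkₐ k (Ideal.span
        {(X : (RatFunc k)[X]) ^ m - C (algebraMap k[X] (RatFunc k) f)}))
        ((X : (RatFunc k)[X]) ^ m - C (algebraMap k[X] (RatFunc k) f)) = 0 := by
      rw [Ideal.Quotient.mkₐ_eq_mk, Ideal.Quotient.eq_zero_iff_mem]
      exact Ideal.mem_span_singleton_self _
    rw [AlgHom.comp_apply, hgen]
    simp [map_mul, h0])

@[simp] lemma sigmaHom_mk (β : RatFunc k →ₐ[k] RatFunc k) (v : RatFunc k)
    (hβf : β (algebraMap k[X] (RatFunc k) f) = v ^ m * algebraMap k[X] (RatFunc k) f)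
    (P : (RatFunc k)[X]) :
    sigmaHom m f β v hβf (Ideal.Quotient.mk _ P) = Ideal.Quotient.mk _ (thetaHom β v P) := by
  simp [sigmaHom]
  rfl

lemma funfield_algHom_ext {ψ₁ ψ₂ : FunField k m f →ₐ[k] FunField k m f}
    (hC : ∀ a : RatFunc k, ψ₁ (Ideal.Quotient.mk _ (C a)) = ψ₂ (Ideal.Quotient.mk _ (C a)))
    (hX : ψ₁ (Ideal.Quotient.mk _ (X : (RatFunc k)[X]))
        = ψ₂ (Ideal.Quotient.mk _ (X : (RatFunc k)[X]))) :
    ψ₁ = ψ₂ := by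
  apply AlgHom.ext
  intro z
  obtain ⟨P, rfl⟩ := Ideal.Quotient.mk_surjective z
  induction P using Polynomial.induction_on with
  | C a => exact hC a
  | add p q hp hq => rw [map_add, map_add, map_add, hp, hq]
  | monomial i a hi =>
      have e : (Ideal.Quotient.mk (Ideal.span
          {(X : (RatFunc k)[X]) ^ m - C (algebraMap k[X] (RatFunc k) f)}) (C a * X ^ (i + 1)))
          = Ideal.Quotient.mk _ (C a * X ^ i) * Ideal.Quotient.mk _ (X : (RatFunc k)[X]) := by
        rw [← map_mul]; congr 1; ring
      rw [e]
      simp only [map_mul] at hi ⊢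
      rw [hi, hX]

lemma p_ne_two {p r q : ℕ} (hp : p.Prime) (hr : 1 ≤ r) (hq : q = p ^ r) (hmod : q % 4 = 3) :
    p ≠ 2 := by
  rintro rfl
  have h2 : 2 ∣ q := hq ▸ dvd_pow_self 2 (by omega)
  omega

lemma neg_four_pow_eq_two {p r q n : ℕ} (hp : p.Prime) (hr : 1 ≤ r) (hq : q = p ^ r)
    (hmod : q % 4 = 3) (hn : 4 * n = q + 1)
    (k : Type*) [Field k] [IsAlgClosed k] [CharP k p] : (-4 : k) ^ n = 2 := by
  haveI : Fact p.Prime := ⟨hp⟩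
  obtain ⟨i, hi⟩ := IsAlgClosed.exists_pow_nat_eq (-1 : k) (n := 2) (by norm_num)
  have h4 : ((1 + i) ^ 4 : k) = -4 := by linear_combination (i ^ 2 + 4 * i + 5) * hi
  have hiq : i ^ q = -i := by
    have hq4 : q = 4 * (q / 4) + 3 := by omega
    rw [hq4, pow_add, pow_mul]
    rw [show i ^ 4 = 1 by linear_combination (i ^ 2 - 1) * hi]
    rw [show i ^ 3 = -i by linear_combination i * hi]
    ring
  have hfrob : ((1 + i) ^ q : k) = 1 + i ^ q := by
    rw [hq, add_pow_char_pow, one_pow]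
  calc (-4 : k) ^ n = ((1 + i) ^ 4) ^ n := by rw [h4]
    _ = (1 + i) ^ (4 * n) := by rw [← pow_mul]
    _ = (1 + i) ^ q * (1 + i) := by rw [hn, pow_succ]
    _ = (1 + i ^ q) * (1 + i) := by rw [hfrob]
    _ = (1 - i) * (1 + i) := by rw [hiq]; ring_nf
    _ = 2 := by linear_combination -hi

end Aux

set_option maxHeartbeats 3200000 in
theorem stmt13 (p r q n m : ℕ) (hp : p.Prime) (hr : 1 ≤ r) (hq : q = p ^ r)
    (hmod : q % 4 = 3) (hn : 4 * n = q + 1) (hm : 2 ≤ m) (hmn : m ∣ n)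
    (k : Type*) [Field k] [IsAlgClosed k] [CharP k p]
    (hirr : Irreducible ((X : (RatFunc k)[X]) ^ m
        - C (algebraMap k[X] (RatFunc k) (dickson 1 1 n)))) :
    ∃ σ : FunField k m (dickson 1 1 n) ≃ₐ[k] FunField k m (dickson 1 1 n),
      orderOf σ = 3 := by
  haveI : Fact p.Prime := ⟨hp⟩
  haveI : CharP (RatFunc k) p :=
    charP_of_injective_algebraMap (algebraMap k (RatFunc k)).injective p
  set F := RatFunc k
  letI : Field F := inferInstanceAs (Field (RatFunc k))
  set x : F := RatFunc.X with hxdef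
  -- basic nonzero facts
  have hp2 : p ≠ 2 := p_ne_two hp hr hq hmod
  have h2 : (2 : F) ≠ 0 := by
    have : ((2 : ℕ) : F) ≠ 0 := by
      rw [Ne, CharP.cast_eq_zero_iff F p]
      exact fun h => hp2 ((Nat.prime_dvd_prime_iff_eq hp Nat.prime_two).mp h)
    simpa using this
  have h2k : (2 : k) ≠ 0 := by
    have : ((2 : ℕ) : k) ≠ 0 := by
      rw [Ne, CharP.cast_eq_zero_iff k p]
      exact fun h => hp2 ((Nat.prime_dvd_prime_iff_eq hp Nat.prime_two).mp h)
    simpa using this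
  have h4 : (4 : F) ≠ 0 := by
    have : (4 : F) = 2 ^ 2 := by norm_num
    rw [this]; exact pow_ne_zero _ h2
  have h16k : (16 : k) ≠ 0 := by
    have : (16 : k) = 2 ^ 4 := by norm_num
    rw [this]; exact pow_ne_zero _ h2k
  have hxc : ∀ c : k, x ≠ algebraMap k F c := by
    intro c hc
    have : algebraMap k[X] F X = algebraMap k[X] F (C c) := by
      rw [RatFunc.algebraMap_X, ← hxdef, hc, RatFunc.algebraMap_C, RatFunc.algebraMap_eq_C]
    exact Polynomial.X_ne_C c (RatFunc.algebraMap_injective k this)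
  have hx0 : x ≠ 0 := by
    simpa using hxc 0
  have hxsub : ∀ c : k, x - algebraMap k F c ≠ 0 := fun c h => hxc c (by linear_combination h)
  have h2x : (2 : F) - x ≠ 0 := by
    have := hxsub 2
    rw [map_ofNat] at this
    intro h; exact this (by linear_combination -h)
  have hx2 : x + 2 ≠ 0 := by
    have := hxsub (-2)
    rw [map_neg, map_ofNat] at this
    intro h; exact this (by linear_combination h)
  have hxm1 : x - 1 ≠ 0 := by
    have := hxsub 1
    rwa [map_one] at this
  have hxp1 : x + 1 ≠ 0 := by
    have := hxsub (-1)
    rw [map_neg, map_one] at this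
    intro h; exact this (by linear_combination h)
  -- the Mobius image of x
  set A : F := (2 * x + 12) / (2 - x) with hAdef
  have hA : ∀ c : k, A ≠ algebraMap k F c := by
    intro c hc
    rw [hAdef, div_eq_iff h2x] at hc
    have hCc : ∀ b : k, algebraMap k[X] F (C b) = algebraMap k F b := by
      intro b; rw [RatFunc.algebraMap_C, RatFunc.algebraMap_eq_C]
    have hXx : algebraMap k[X] F X = x := by rw [RatFunc.algebraMap_X, hxdef]
    have he : algebraMap k[X] F (2 * X + 12) = algebraMap k[X] F (C c * (2 - X)) := by
      push_cast [map_add, map_mul, map_sub, map_ofNat, hXx, hCc]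
      linear_combination hc
    have hpoly := RatFunc.algebraMap_injective k he
    have := congrArg (Polynomial.eval (2 : k)) hpoly
    simp at this
    norm_num at this
    exact h16k (by linear_combination this)
  -- the auxiliary substitution x ↦ x^2 + x^(-2)
  set g : F := x ^ 2 + (x ^ 2)⁻¹ with hgdef
  have hgne : ∀ c : k, g ≠ algebraMap k F c := by
    intro c hc
    have hx2ne : (x : F) ^ 2 ≠ 0 := pow_ne_zero _ hx0
    have hc2 : x ^ 4 + 1 = algebraMap k F c * x ^ 2 := by
      rw [hgdef] at hc
      field_simp at hc
      linear_combination hc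
    have hCc : ∀ b : k, algebraMap k[X] F (C b) = algebraMap k F b := by
      intro b; rw [RatFunc.algebraMap_C, RatFunc.algebraMap_eq_C]
    have hXx : algebraMap k[X] F X = x := by rw [RatFunc.algebraMap_X, hxdef]
    have he : algebraMap k[X] F (X ^ 4 + 1) = algebraMap k[X] F (C c * X ^ 2) := by
      push_cast [map_add, map_mul, map_one, map_pow, hXx, hCc]
      linear_combination hc2
    have hpoly := RatFunc.algebraMap_injective k he
    have := congrArg (Polynomial.eval (0 : k)) hpoly
    simp at this
  -- the dickson polynomial
  set d : k[X] := dickson 1 1 n with hddef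
  have hdick : ∀ c : F, c ≠ 0 → Polynomial.aeval (R := k) (c + c⁻¹) d = c ^ n + (c⁻¹) ^ n := by
    intro c hc
    rw [hddef, Polynomial.aeval_def, Polynomial.eval₂_eq_eval_map, Polynomial.map_dickson,
      map_one]
    exact Polynomial.dickson_one_one_eval_add_inv c c⁻¹ (mul_inv_cancel₀ hc) n
  have hqodd : Odd q := Nat.odd_iff.mpr (by omega)
  have key1 : ((x : F) - 1) ^ (4 * n) + (x + 1) ^ (4 * n) = 2 * x ^ (4 * n) + 2 := by
    have hfp : ∀ y : F, (y + 1) ^ q = y ^ q + 1 := fun y => by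
      rw [hq, add_pow_char_pow, one_pow]
    have hfm : (x - 1 : F) ^ q = x ^ q - 1 := by
      rw [sub_eq_add_neg, hq, add_pow_char_pow]
      rw [show ((-1 : F)) ^ p ^ r = -1 from Odd.neg_one_pow (hq ▸ hqodd)]
      ring
    have e1 : (x + 1 : F) ^ (4 * n) = (x ^ q + 1) * (x + 1) := by rw [hn, pow_succ, hfp]
    have e2 : (x - 1 : F) ^ (4 * n) = (x ^ q - 1) * (x - 1) := by rw [hn, pow_succ, hfm]
    have e3 : (x : F) ^ (4 * n) = x ^ q * x := by rw [hn, pow_succ]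
    rw [e1, e2, e3]; ring
  have h42 : (-4 : F) ^ n = 2 := by
    have hk := neg_four_pow_eq_two hp hr hq hmod hn k
    calc (-4 : F) ^ n = algebraMap k F ((-4 : k) ^ n) := by rw [map_pow, map_neg, map_ofNat]
      _ = 2 := by rw [hk, map_ofNat]
  -- the key identity
  have key : Polynomial.aeval (R := k) A d * (2 - x) ^ n = (-4 : F) ^ n * algebraMap k[X] F d := by
    have hEinj : Function.Injective (molt g hgne) := fun a b hab =>
      (molt g hgne).toRingHom.injective hab
    apply hEinj
    rw [map_mul, map_mul, ← Polynomial.aeval_algHom_apply, molt_algebraMap]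
    have hEx : molt g hgne x = g := molt_X g hgne
    have hEA : molt g hgne A = (2 * g + 12) / (2 - g) := by
      rw [hAdef, map_div₀, map_add, map_mul, map_sub, map_ofNat, map_ofNat, hEx]
    have hE2x : molt g hgne ((2 - x) ^ n) = (2 - g) ^ n := by
      rw [map_pow, map_sub, map_ofNat, hEx]
    have hE4 : molt g hgne ((-4 : F) ^ n) = (-4 : F) ^ n := by
      rw [map_pow, map_neg, map_ofNat]
    rw [hEA, hE2x, hE4, h42]
    -- now a pure computation in F
    set s : F := -((x - 1) ^ 2 / (x + 1) ^ 2) with hsdef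
    have hb2 : ((x + 1 : F)) ^ 2 ≠ 0 := pow_ne_zero _ hxp1
    have ha2 : ((x - 1 : F)) ^ 2 ≠ 0 := pow_ne_zero _ hxm1
    have hx2ne : (x : F) ^ 2 ≠ 0 := pow_ne_zero _ hx0
    have hs0 : s ≠ 0 := by
      rw [hsdef]
      exact neg_ne_zero.mpr (div_ne_zero ha2 hb2)
    have hsinv : s⁻¹ = -((x + 1) ^ 2 / (x - 1) ^ 2) := by
      apply inv_eq_of_mul_eq_one_right
      rw [hsdef]
      field_simp
    have hg2 : (2 : F) - g = -((x - 1) ^ 2 * (x + 1) ^ 2) / x ^ 2 := by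
      rw [hgdef]; field_simp; ring
    have h2g : (2 : F) - g ≠ 0 := by
      rw [hg2]
      exact div_ne_zero (neg_ne_zero.mpr (mul_ne_zero ha2 hb2)) hx2ne
    have hAg : (2 * g + 12) / (2 - g) = s + s⁻¹ := by
      rw [div_eq_iff h2g, hsinv, hsdef, hg2, hgdef]
      field_simp
      ring
    rw [hAg, hdick s hs0, hgdef, hdick (x ^ 2) hx2ne]
    rw [← hgdef]
    have hstep1 : s * (2 - g) = (x - 1) ^ 4 / x ^ 2 := by
      rw [hsdef, hg2]; field_simp
    have hstep2 : s⁻¹ * (2 - g) = (x + 1) ^ 4 / x ^ 2 := by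
      rw [hsinv, hg2]; field_simp
    have hx2n : (x : F) ^ (2 * n) ≠ 0 := pow_ne_zero _ hx0
    calc (s ^ n + (s⁻¹) ^ n) * (2 - g) ^ n
        = (s * (2 - g)) ^ n + (s⁻¹ * (2 - g)) ^ n := by rw [mul_pow, mul_pow]; ring
      _ = ((x - 1) ^ 4 / x ^ 2) ^ n + ((x + 1) ^ 4 / x ^ 2) ^ n := by rw [hstep1, hstep2]
      _ = ((x - 1) ^ (4 * n) + (x + 1) ^ (4 * n)) / x ^ (2 * n) := by
          simp only [div_pow, ← pow_mul]
          rw [← add_div]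
      _ = (2 * x ^ (4 * n) + 2) / x ^ (2 * n) := by rw [key1]
      _ = 2 * ((x ^ 2) ^ n + ((x ^ 2)⁻¹) ^ n) := by
          simp only [inv_pow, ← pow_mul]
          rw [div_eq_iff hx2n, show 4 * n = 2 * n + 2 * n by ring, pow_add]
          field_simp
  -- the coefficient automorphism α
  set α := molt A hA with hαdef
  have hαx : α x = A := molt_X A hA
  have hden : (2 : F) - A = -4 * (x + 2) / (2 - x) := by
    rw [hAdef]; field_simp; ring
  have h2A : (2 : F) - A ≠ 0 := by
    rw [hden]
    exact div_ne_zero (mul_ne_zero (neg_ne_zero.mpr h4) hx2) h2x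
  have hA2e : A + 2 = 16 / (2 - x) := by
    rw [hAdef]; field_simp; ring
  have h16 : (16 : F) ≠ 0 := by
    have : (16 : F) = 2 ^ 4 := by norm_num
    rw [this]; exact pow_ne_zero _ h2
  have hA2ne : A + 2 ≠ 0 := by rw [hA2e]; exact div_ne_zero h16 h2x
  have hαA : α A = (2 * x - 12) / (x + 2) := by
    have e : α A = (2 * A + 12) / (2 - A) := by
      rw [show α A = α ((2 * x + 12) / (2 - x)) from by rw [← hAdef]]
      rw [map_div₀, map_add, map_mul, map_sub, map_ofNat, map_ofNat, hαx]
    rw [e, div_eq_div_iff h2A hx2, hAdef]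
    field_simp
    ring
  have hαA2 : α ((2 * x - 12) / (x + 2)) = x := by
    rw [map_div₀, map_sub, map_add, map_mul, map_ofNat, map_ofNat, hαx]
    rw [div_eq_iff hA2ne, hAdef]
    field_simp
    ring
  have hα3 : ∀ a : F, α (α (α a)) = a := by
    have hext : α.comp (α.comp α) = AlgHom.id k F := by
      apply ratfunc_algHom_ext
      simp only [AlgHom.comp_apply, AlgHom.id_apply]
      rw [show (RatFunc.X : F) = x from hxdef.symm, hαx, hαA, hαA2]
      rfl
    intro a
    exact DFunLike.congr_fun hext a
  -- the unit w and its orbit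
  set w : F := -4 / (2 - x) with hwdef
  have hαw : α w = (2 - x) / (x + 2) := by
    rw [hwdef, map_div₀, map_neg, map_ofNat, map_sub, map_ofNat, hαx, hden]
    rw [div_eq_div_iff (div_ne_zero (mul_ne_zero (neg_ne_zero.mpr h4) hx2) h2x) hx2]
    field_simp
  have hαw2 : α ((2 - x) / (x + 2)) = -(x + 2) / 4 := by
    rw [map_div₀, map_sub, map_add, map_ofNat, hαx, hden, hA2e]
    rw [div_div_div_comm, div_self h2x, div_one, div_eq_div_iff h16 h4]
    ring
  have hw1 : α (α w) * α w * w = 1 := by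
    rw [hαw, hαw2, hwdef]
    field_simp
  -- exponents
  set t := n / m with htdef
  have htm : t * m = n := Nat.div_mul_cancel hmn
  set v : F := w ^ t with hvdef
  have hvm : v ^ m = (-4 : F) ^ n / (2 - x) ^ n := by
    rw [hvdef, ← pow_mul, htm, hwdef, div_pow]
  have hv1 : α (α v) * α v * v = 1 := by
    rw [hvdef, map_pow, map_pow, ← mul_pow, ← mul_pow, hw1, one_pow]
  have hbf : α (algebraMap k[X] F d) = v ^ m * algebraMap k[X] F d := by
    rw [hαdef, molt_algebraMap, hvm, div_mul_eq_mul_div, eq_div_iff (pow_ne_zero _ h2x)]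
    linear_combination key
  -- the induced endomorphism of the function field
  set S := sigmaHom m d α v hbf with hSdef
  have hSC : ∀ a : F, S (Ideal.Quotient.mk _ (C a)) = Ideal.Quotient.mk _ (C (α a)) := by
    intro a
    rw [hSdef, sigmaHom_mk, thetaHom_C]
  have hS3 : S.comp (S.comp S) = AlgHom.id k (FunField k m d) := by
    apply funfield_algHom_ext m d
    · intro a
      simp only [AlgHom.comp_apply, AlgHom.id_apply]
      rw [hSC, hSC, hSC, hα3]
    · simp only [AlgHom.comp_apply, AlgHom.id_apply]
      simp only [hSdef, sigmaHom_mk]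
      congr 1
      simp only [thetaHom_X, map_mul, thetaHom_C]
      have e : C (α (α v)) * (C (α v) * (C v * (X : (RatFunc k)[X])))
          = C (α (α v) * α v * v) * X := by
        rw [C_mul, C_mul]; ring
      rw [e, hv1, map_one, one_mul]
  have hid2 : (S.comp S).comp S = AlgHom.id k (FunField k m d) := by
    rw [AlgHom.comp_assoc]; exact hS3
  refine ⟨AlgEquiv.ofAlgHom S (S.comp S) hS3 hid2, ?_⟩
  set σ : FunField k m d ≃ₐ[k] FunField k m d := AlgEquiv.ofAlgHom S (S.comp S) hS3 hid2
    with hσdef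
  have hσS : ∀ z, σ z = S z := fun z => rfl
  have hσ3 : σ ^ 3 = 1 := by
    apply AlgEquiv.ext
    intro z
    have h := DFunLike.congr_fun hS3 z
    simp only [AlgHom.comp_apply, AlgHom.id_apply] at h
    have e3 : σ ^ 3 = σ * σ * σ := by rw [pow_succ, pow_succ, pow_one]
    rw [e3, AlgEquiv.mul_apply, AlgEquiv.mul_apply, AlgEquiv.one_apply, hσS, hσS, hσS]
    exact h
  have hσne : σ ≠ 1 := by
    intro h1
    have h2' := DFunLike.congr_fun h1 (Ideal.Quotient.mk _ (C x))
    rw [AlgEquiv.one_apply, hσS, hSC, hαx] at h2'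
    have hAx : A - x ≠ 0 := by
      intro h0
      have hA_eq : (2 : F) * x + 12 = x * (2 - x) := by
        have hh : A = x := by linear_combination h0
        rw [hAdef, div_eq_iff h2x] at hh
        linear_combination hh
      have hXx : algebraMap k[X] F X = x := by rw [RatFunc.algebraMap_X, hxdef]
      have he : algebraMap k[X] F (2 * X + 12) = algebraMap k[X] F (X * (2 - X)) := by
        push_cast [map_add, map_mul, map_sub, map_ofNat, hXx]
        linear_combination hA_eq
      have hpoly := RatFunc.algebraMap_injective k he
      have h16e := congrArg (Polynomial.eval (2 : k)) hpoly
      simp at h16e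
      exact h16k (by linear_combination h16e)
    have hmem : (C (A - x) : (RatFunc k)[X])
        ∈ Ideal.span {(X : (RatFunc k)[X]) ^ m - C (algebraMap k[X] F d)} := by
      rw [← Ideal.Quotient.eq_zero_iff_mem, map_sub, map_sub, h2']
      ring
    rw [Ideal.mem_span_singleton] at hmem
    exact hirr.not_isUnit (isUnit_of_dvd_unit hmem (Polynomial.isUnit_C.mpr hAx.isUnit))
  have hdvd := orderOf_dvd_of_pow_eq_one hσ3
  rcases Nat.prime_three.eq_one_or_self_of_dvd _ hdvd with h | h
  · exact absurd (orderOf_eq_one_iff.mp h) hσne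
  · exact h
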